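/- Let H be an infinite-dimensional separable real Hilbert space which is an orthogonal SO(2)-representation, let Φ ∈ C²(H×ℝ,ℝ) satisfy condition (c2), and let λ₋ < λ₀ < λ₊ be such that Id - K_∞(λ) is an isomorphism of H for every λ ∈ [λ₋,λ₊] \ {λ₀}. Then every unbounded closed connected subset C of {(u,λ) ∈ H × [λ₋,λ₊] : ∇ᵤΦ(u,λ) = 0} meets (∞,λ₀), i.e., for all γ, δ > 0 there is (u,λ) ∈ C with ‖u‖ > γ and |λ - λ₀| ≤ δ. -/

import Mathlib

open Real

open Topology Filter

noncomputable section

/-- A map between (subsets of) normed spaces is compact if it maps bounded sets into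
relatively compact sets. -/
def IsCompactMap {X Y : Type*} [NormedAddCommGroup X] [NormedAddCommGroup Y]
    (f : X → Y) : Prop :=
  ∀ s : Set X, Bornology.IsBounded s → IsCompact (closure (f '' s))

section Aux

open InnerProductSpace

variable {H : Type} [NormedAddCommGroup H] [InnerProductSpace ℝ H] [CompleteSpace H]

lemma quadGrad (A : H →L[ℝ] H) (hA : ∀ u v : H, (inner ℝ (A u) v : ℝ) = inner ℝ u (A v)) (u : H) :
    HasGradientAt (fun w : H => (1/2:ℝ) * (inner ℝ w w : ℝ) - (1/2:ℝ) * (inner ℝ (A w) w : ℝ))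
      (u - A u) u := by
  rw [hasGradientAt_iff_hasFDerivAt]
  have h1 := ((hasFDerivAt_id u).inner ℝ (hasFDerivAt_id u)).const_mul (1/2:ℝ)
  have h2 := ((A.hasFDerivAt).inner ℝ (hasFDerivAt_id u)).const_mul (1/2:ℝ)
  refine (h1.sub h2).congr_fderiv ?_
  ext v
  simp only [ContinuousLinearMap.smulRight_apply, ContinuousLinearMap.sub_apply,
    ContinuousLinearMap.smul_apply, ContinuousLinearMap.comp_apply,
    ContinuousLinearMap.prod_apply, ContinuousLinearMap.coe_id', id_eq,
    fderivInnerCLM_apply, smul_eq_mul, toDual_apply_apply, inner_sub_left]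
  have e1 : (inner ℝ v u : ℝ) = inner ℝ u v := real_inner_comm u v
  have e2 : (inner ℝ (A v) u : ℝ) = inner ℝ (A u) v := by
    rw [hA v u, real_inner_comm]
  ring_nf
  rw [e1, e2]
  ring

lemma gradEta (Φ : H × ℝ → ℝ) (hΦ : ContDiff ℝ 2 Φ) (K : ℝ → H →L[ℝ] H) (η : H × ℝ → ℝ)
    (hc2 : ∀ (u : H) (l : ℝ),
      Φ (u, l) = (1/2 : ℝ) * (inner ℝ u u : ℝ) - (1/2 : ℝ) * (inner ℝ (K l u) u : ℝ) - η (u, l))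
    (hKsa : ∀ (l : ℝ) (u v : H), (inner ℝ (K l u) v : ℝ) = (inner ℝ u (K l v) : ℝ))
    (u : H) (l : ℝ) :
    gradient (fun w => η (w, l)) u = u - K l u - gradient (fun w => Φ (w, l)) u := by
  have hd : DifferentiableAt ℝ (fun w : H => Φ (w, l)) u :=
    DifferentiableAt.comp u ((hΦ.differentiable (by norm_num)) (u, l))
      (differentiableAt_id.prodMk (differentiableAt_const l))
  have hg : HasGradientAt (fun w : H => Φ (w, l)) (gradient (fun w => Φ (w, l)) u) u :=
    hd.hasGradientAt
  have hQ := quadGrad (K l) (hKsa l) u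
  have hfe : (fun w : H => ((1/2:ℝ) * (inner ℝ w w : ℝ) - (1/2:ℝ) * (inner ℝ (K l w) w : ℝ))
      - Φ (w, l)) = fun w => η (w, l) := by
    funext w
    have := hc2 w l
    linarith
  have hsub : HasFDerivAt (fun w : H => ((1/2:ℝ) * (inner ℝ w w : ℝ)
        - (1/2:ℝ) * (inner ℝ (K l w) w : ℝ)) - Φ (w, l))
      (toDual ℝ H (u - K l u) - toDual ℝ H (gradient (fun w => Φ (w, l)) u)) u :=
    hQ.hasFDerivAt.sub hg.hasFDerivAt
  rw [hfe] at hsub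
  have : HasGradientAt (fun w => η (w, l))
      (u - K l u - gradient (fun w => Φ (w, l)) u) u := by
    rw [hasGradientAt_iff_hasFDerivAt, map_sub]
    exact hsub
  exact this.gradient

lemma gradPhiLambdaCont (Φ : H × ℝ → ℝ) (hΦ : ContDiff ℝ 2 Φ) (x : H) :
    Continuous fun l : ℝ => gradient (fun w => Φ (w, l)) x := by
  have hd := hΦ.differentiable (by norm_num)
  have hgrad : ∀ l : ℝ, gradient (fun w => Φ (w, l)) x
      = (toDual ℝ H).symm ((fderiv ℝ Φ (x, l)).comp
          ((ContinuousLinearMap.id ℝ H).prod 0)) := by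
    intro l
    have h1 : HasFDerivAt (fun w : H => (w, l)) ((ContinuousLinearMap.id ℝ H).prod 0) x :=
      (hasFDerivAt_id x).prodMk (hasFDerivAt_const l x)
    have h2 : HasFDerivAt (fun w => Φ (w, l))
        ((fderiv ℝ Φ (x, l)).comp ((ContinuousLinearMap.id ℝ H).prod 0)) x :=
      HasFDerivAt.comp x ((hd (x, l)).hasFDerivAt) h1
    exact (hasFDerivAt_iff_hasGradientAt.mp h2).gradient
  simp only [hgrad]
  exact (toDual ℝ H).symm.continuous.comp
    (Continuous.clm_comp ((hΦ.continuous_fderiv (by norm_num)).comp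
      (continuous_const.prodMk continuous_id)) continuous_const)

end Aux

theorem stmt_7
    -- H : infinite-dimensional separable real Hilbert space
    (H : Type) [NormedAddCommGroup H] [InnerProductSpace ℝ H] [CompleteSpace H]
    [TopologicalSpace.SeparableSpace H] (hdim : ¬ FiniteDimensional ℝ H)
    -- orthogonal SO(2)-representation with continuous action
    (ρ : Circle →* (H ≃ₗᵢ[ℝ] H))
    (hcont : Continuous fun p : Circle × H => ρ p.1 p.2)
    -- Φ ∈ C²(H×ℝ,ℝ), SO(2)-invariant in the first variable
    (Φ : H × ℝ → ℝ) (hΦ : ContDiff ℝ 2 Φ)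
    (hinv : ∀ (g : Circle) (u : H) (l : ℝ), Φ (ρ g u, l) = Φ (u, l))
    -- condition (c2)
    (K : ℝ → H →L[ℝ] H) (η : H × ℝ → ℝ)
    (hc2 : ∀ (u : H) (l : ℝ),
      Φ (u, l) = (1/2 : ℝ) * (inner ℝ u u : ℝ) - (1/2 : ℝ) * (inner ℝ (K l u) u : ℝ) - η (u, l))
    (hKsa : ∀ (l : ℝ) (u v : H), (inner ℝ (K l u) v : ℝ) = (inner ℝ u (K l v) : ℝ))
    (hKeq : ∀ (l : ℝ) (g : Circle) (u : H), K l (ρ g u) = ρ g (K l u))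
    (hKcomp : IsCompactMap fun p : H × ℝ => K p.2 p.1)
    (hηeq : ∀ (g : Circle) (u : H) (l : ℝ),
      gradient (fun w => η (w, l)) (ρ g u) = ρ g (gradient (fun w => η (w, l)) u))
    (hηcomp : IsCompactMap fun p : H × ℝ => gradient (fun w => η (w, p.2)) p.1)
    (hηsmall : ∀ ε > (0:ℝ), ∀ a b : ℝ, ∃ R : ℝ, ∀ (u : H) (l : ℝ),
      l ∈ Set.Icc a b → R ≤ ‖u‖ → ‖gradient (fun w => η (w, l)) u‖ ≤ ε * ‖u‖)
    -- λ₋ < λ₀ < λ₊ with Id - K_∞(λ) an isomorphism for λ ∈ [λ₋,λ₊] \ {λ₀}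
    (lm l0 lp : ℝ) (hlm : lm < l0) (hlp : l0 < lp)
    (hiso : ∀ l ∈ Set.Icc lm lp, l ≠ l0 →
      ∃ T : H ≃L[ℝ] H, ∀ u : H, T u = u - K l u)
    -- C : unbounded closed connected subset of the solution set
    (C : Set (H × ℝ))
    (hCsub : C ⊆ {p : H × ℝ | p.2 ∈ Set.Icc lm lp ∧ gradient (fun w => Φ (w, p.2)) p.1 = 0})
    (hCclosed : IsClosed C) (hCconn : IsConnected C)
    (hCunb : ¬ Bornology.IsBounded C) :
    ∀ γ > (0:ℝ), ∀ δ > (0:ℝ), ∃ p ∈ C, γ < ‖p.1‖ ∧ |p.2 - l0| ≤ δ := by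
  intro γ hγ δ hδ
  by_contra hcon
  push_neg at hcon
  -- hcon : ∀ p ∈ C, γ < ‖p.1‖ → δ < |p.2 - l0|
  classical
  set B : ℝ := max |lm| |lp| with hB
  have hB0 : (0:ℝ) ≤ B := le_trans (abs_nonneg lm) (le_max_left _ _)
  have hl2B : ∀ p ∈ C, |p.2| ≤ B := by
    intro p hp
    obtain ⟨⟨h1, h2⟩, -⟩ := hCsub hp
    rw [abs_le]
    constructor
    · have := neg_abs_le lm
      have := le_max_left |lm| |lp|
      linarith
    · have := le_abs_self lp
      have := le_max_right |lm| |lp|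
      linarith
  have hCun : ∀ r : ℝ, ∃ p ∈ C, r < ‖p‖ := by
    by_contra hr
    push_neg at hr
    obtain ⟨r, hr⟩ := hr
    exact hCunb (isBounded_iff_forall_norm_le.mpr ⟨r, hr⟩)
  choose p hpC hpn using fun n : ℕ => hCun ((n : ℝ) + B + γ + 1)
  have hun : ∀ n : ℕ, (n : ℝ) + γ + 1 < ‖(p n).1‖ := by
    intro n
    have h2 : ‖(p n).2‖ ≤ B := by rw [Real.norm_eq_abs]; exact hl2B _ (hpC n)
    have hbig := hpn n
    rw [Prod.norm_def] at hbig
    have hn0 : (0:ℝ) ≤ (n : ℝ) := Nat.cast_nonneg n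
    have := (lt_max_iff.mp hbig).resolve_right (by push_neg; linarith)
    linarith
  have hγn : ∀ n : ℕ, γ < ‖(p n).1‖ := by
    intro n
    have hn0 : (0:ℝ) ≤ (n : ℝ) := Nat.cast_nonneg n
    have := hun n
    linarith
  have hfar : ∀ n : ℕ, δ < |(p n).2 - l0| := fun n => hcon _ (hpC n) (hγn n)
  have hlmem : ∀ n : ℕ, (p n).2 ∈ Set.Icc lm lp := fun n => (hCsub (hpC n)).1
  -- subsequence with converging λ
  obtain ⟨ls, hlsIcc, φ, hφ, hlφ⟩ := isCompact_Icc.tendsto_subseq hlmem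
  have hlsne : ls ≠ l0 := by
    have hten : Filter.Tendsto (fun n => |(p (φ n)).2 - l0|) Filter.atTop (𝓝 |ls - l0|) := by
      exact ((hlφ.sub_const l0).abs)
    have hge : δ ≤ |ls - l0| :=
      ge_of_tendsto hten (Filter.Eventually.of_forall fun n => (hfar (φ n)).le)
    intro h
    rw [h, sub_self, abs_zero] at hge
    linarith
  obtain ⟨T, hT⟩ := hiso ls hlsIcc hlsne
  -- normalized sequence
  have hupos : ∀ n : ℕ, (0:ℝ) < ‖(p n).1‖ := by
    intro n
    have hn0 : (0:ℝ) ≤ (n : ℝ) := Nat.cast_nonneg n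
    have := hun n
    linarith
  set u : ℕ → H := fun n => (p n).1 with hu
  set lam : ℕ → ℝ := fun n => (p n).2 with hlam
  set v : ℕ → H := fun n => ‖u n‖⁻¹ • u n with hv
  have hv1 : ∀ n, ‖v n‖ = 1 := by
    intro n
    rw [hv]
    simp only [norm_smul, norm_inv, norm_norm]
    exact inv_mul_cancel₀ (hupos n).ne'
  -- the equation at solutions
  have heq : ∀ n, gradient (fun w => η (w, lam n)) (u n) = u n - K (lam n) (u n) := by
    intro n
    rw [gradEta Φ hΦ K η hc2 hKsa, (hCsub (hpC n)).2, sub_zero]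
  have heqv : ∀ n, v n = K (lam n) (v n)
      + ‖u n‖⁻¹ • gradient (fun w => η (w, lam n)) (u n) := by
    intro n
    rw [heq n, hv]
    simp only [smul_sub, map_smul]
    abel
  -- the remainder tends to zero
  have hr0 : Filter.Tendsto
      (fun n => ‖u n‖⁻¹ • gradient (fun w => η (w, lam n)) (u n)) Filter.atTop (𝓝 0) := by
    rw [Metric.tendsto_atTop]
    intro ε hε
    obtain ⟨R, hR⟩ := hηsmall (ε/2) (by linarith) lm lp
    obtain ⟨N, hN⟩ := exists_nat_gt R
    refine ⟨N, fun n hn => ?_⟩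
    have hNn : (N : ℝ) ≤ (n : ℝ) := Nat.cast_le.mpr hn
    have hRu : R ≤ ‖u n‖ := by
      have := hun n
      have hg0 : (0:ℝ) < γ := hγ
      simp only [hu]
      linarith
    have hb := hR (u n) (lam n) (hlmem n) hRu
    rw [dist_zero_right, norm_smul, norm_inv, norm_norm]
    have h1 : ‖u n‖⁻¹ * ‖gradient (fun w => η (w, lam n)) (u n)‖
        ≤ ‖u n‖⁻¹ * (ε/2 * ‖u n‖) :=
      mul_le_mul_of_nonneg_left hb (inv_nonneg.mpr (norm_nonneg _))
    have h2 : ‖u n‖⁻¹ * (ε/2 * ‖u n‖) = ε/2 := by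
      rw [mul_comm (ε/2) ‖u n‖, ← mul_assoc, inv_mul_cancel₀ (hupos n).ne', one_mul]
    rw [h2] at h1
    linarith
  -- compactness: extract convergent subsequence of K (lam n) (v n)
  have hbdd : Bornology.IsBounded (Set.range fun n : ℕ => (v (φ n), lam (φ n))) := by
    rw [isBounded_iff_forall_norm_le]
    refine ⟨max 1 B, ?_⟩
    rintro x ⟨n, rfl⟩
    rw [Prod.norm_def]
    apply max_le_max
    · rw [hv1]
    · rw [Real.norm_eq_abs]; exact hl2B (p (φ n)) (hpC (φ n))
  have hKc := hKcomp _ hbdd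
  have hmemcl : ∀ n : ℕ, K (lam (φ n)) (v (φ n)) ∈
      closure ((fun p : H × ℝ => K p.2 p.1) '' (Set.range fun n : ℕ => (v (φ n), lam (φ n)))) :=
    fun n => subset_closure ⟨(v (φ n), lam (φ n)), ⟨n, rfl⟩, rfl⟩
  obtain ⟨q, hqmem, ψ, hψ, hqlim⟩ := hKc.tendsto_subseq hmemcl
  set σ : ℕ → ℕ := φ ∘ ψ with hσdef
  have hσmono : StrictMono σ := hφ.comp hψ
  have hlσ : Filter.Tendsto (fun n => lam (σ n)) Filter.atTop (𝓝 ls) :=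
    hlφ.comp hψ.tendsto_atTop
  have hrσ : Filter.Tendsto
      (fun n => ‖u (σ n)‖⁻¹ • gradient (fun w => η (w, lam (σ n))) (u (σ n)))
      Filter.atTop (𝓝 0) := hr0.comp hσmono.tendsto_atTop
  have hKvq : Filter.Tendsto (fun n => K (lam (σ n)) (v (σ n))) Filter.atTop (𝓝 q) := hqlim
  have hvq : Filter.Tendsto (fun n => v (σ n)) Filter.atTop (𝓝 q) := by
    have hfe : (fun n => v (σ n)) = fun n => K (lam (σ n)) (v (σ n))
        + ‖u (σ n)‖⁻¹ • gradient (fun w => η (w, lam (σ n))) (u (σ n)) :=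
      funext fun n => heqv (σ n)
    rw [hfe]
    simpa using hKvq.add hrσ
  have hq1 : ‖q‖ = 1 := by
    have h1 : Filter.Tendsto (fun n => ‖v (σ n)‖) Filter.atTop (𝓝 ‖q‖) := hvq.norm
    have h2 : Filter.Tendsto (fun n => ‖v (σ n)‖) Filter.atTop (𝓝 1) := by
      simp only [hv1]
      exact tendsto_const_nhds
    exact tendsto_nhds_unique h1 h2
  -- Banach–Steinhaus: uniform bound on ‖K (lam (σ n))‖
  have hptw : ∀ x : H, ∃ Cx : ℝ, ∀ n : ℕ, ‖K (lam (σ n)) x‖ ≤ Cx := by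
    intro x
    have hbx : Bornology.IsBounded (Set.range fun n : ℕ => ((x, lam (σ n)) : H × ℝ)) := by
      rw [isBounded_iff_forall_norm_le]
      refine ⟨max ‖x‖ B, ?_⟩
      rintro y ⟨n, rfl⟩
      rw [Prod.norm_def]
      apply max_le_max le_rfl
      rw [Real.norm_eq_abs]; exact hl2B (p (σ n)) (hpC (σ n))
    have hcx := hKcomp _ hbx
    obtain ⟨Cx, hCx⟩ := isBounded_iff_forall_norm_le.mp hcx.isBounded
    exact ⟨Cx, fun n => hCx _ (subset_closure ⟨(x, lam (σ n)), ⟨n, rfl⟩, rfl⟩)⟩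
  obtain ⟨M, hM⟩ := banach_steinhaus hptw
  have hM0 : (0:ℝ) ≤ M := le_trans (norm_nonneg _) (hM 0)
  -- K (lam (σ n)) q → q
  have hKq_q : Filter.Tendsto (fun n => K (lam (σ n)) q) Filter.atTop (𝓝 q) := by
    have hz : Filter.Tendsto (fun n => K (lam (σ n)) (q - v (σ n))) Filter.atTop (𝓝 0) := by
      refine squeeze_zero_norm (a := fun n => M * ‖q - v (σ n)‖) ?_ ?_
      · intro n
        calc ‖K (lam (σ n)) (q - v (σ n))‖ ≤ ‖K (lam (σ n))‖ * ‖q - v (σ n)‖ :=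
              (K (lam (σ n))).le_opNorm _
          _ ≤ M * ‖q - v (σ n)‖ :=
              mul_le_mul_of_nonneg_right (hM n) (norm_nonneg _)
      · have : Filter.Tendsto (fun n => ‖q - v (σ n)‖) Filter.atTop (𝓝 0) := by
          have := (tendsto_const_nhds (x := q)).sub hvq
          simpa using this.norm
        simpa using this.const_mul M
    have hfe : (fun n => K (lam (σ n)) q) = fun n => K (lam (σ n)) (v (σ n))
        + K (lam (σ n)) (q - v (σ n)) := by
      funext n
      rw [map_sub]
      abel
    rw [hfe]
    simpa using hKvq.add hz
  -- K (lam (σ n)) q → K ls q (continuity in λ)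
  have hKq_c : Filter.Tendsto (fun n => K (lam (σ n)) q) Filter.atTop (𝓝 (K ls q)) := by
    rw [Metric.tendsto_atTop]
    intro ε hε
    obtain ⟨R, hR⟩ := hηsmall (ε/4) (by linarith) lm lp
    set t : ℝ := max R 1 with ht
    have ht1 : (1:ℝ) ≤ t := le_max_right _ _
    have ht0 : (0:ℝ) < t := lt_of_lt_of_le one_pos ht1
    have hnq : ‖t • q‖ = t := by
      rw [norm_smul, hq1, mul_one, Real.norm_eq_abs, abs_of_pos ht0]
    -- identity expressing K l q via the gradients
    have hid : ∀ l : ℝ, K l q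
        = q - t⁻¹ • gradient (fun w => Φ (w, l)) (t • q)
            - t⁻¹ • gradient (fun w => η (w, l)) (t • q) := by
      intro l
      have h := gradEta Φ hΦ K η hc2 hKsa (t • q) l
      have hKsmul : K l (t • q) = t • K l q := map_smul _ _ _
      have : t⁻¹ • gradient (fun w => η (w, l)) (t • q)
          = q - K l q - t⁻¹ • gradient (fun w => Φ (w, l)) (t • q) := by
        rw [h, hKsmul]
        rw [smul_sub, smul_sub, smul_smul, inv_mul_cancel₀ ht0.ne', one_smul,
          smul_smul, inv_mul_cancel₀ ht0.ne', one_smul]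
      rw [this]
      abel
    -- bound on the η-terms
    have hηb : ∀ l ∈ Set.Icc lm lp,
        ‖t⁻¹ • gradient (fun w => η (w, l)) (t • q)‖ ≤ ε/4 := by
      intro l hl
      have hb := hR (t • q) l hl (by rw [hnq]; exact le_max_left _ _)
      rw [norm_smul, norm_inv, Real.norm_eq_abs, abs_of_pos ht0]
      calc t⁻¹ * ‖gradient (fun w => η (w, l)) (t • q)‖
          ≤ t⁻¹ * (ε/4 * ‖t • q‖) :=
            mul_le_mul_of_nonneg_left hb (inv_nonneg.mpr ht0.le)
        _ = ε/4 := by rw [hnq, mul_comm (ε/4) t, ← mul_assoc, inv_mul_cancel₀ ht0.ne', one_mul]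
    -- continuity of the Φ-gradient in λ
    have hct : Filter.Tendsto (fun n => gradient (fun w => Φ (w, lam (σ n))) (t • q))
        Filter.atTop (𝓝 (gradient (fun w => Φ (w, ls)) (t • q))) :=
      ((gradPhiLambdaCont Φ hΦ (t • q)).tendsto ls).comp hlσ
    obtain ⟨N, hN⟩ := (Metric.tendsto_atTop.mp hct) (ε/4 * t) (by positivity)
    refine ⟨N, fun n hn => ?_⟩
    have hNn := hN n hn
    rw [dist_eq_norm] at hNn ⊢
    rw [hid (lam (σ n)), hid ls]
    have hrew : (q - t⁻¹ • gradient (fun w => Φ (w, lam (σ n))) (t • q)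
            - t⁻¹ • gradient (fun w => η (w, lam (σ n))) (t • q))
        - (q - t⁻¹ • gradient (fun w => Φ (w, ls)) (t • q)
            - t⁻¹ • gradient (fun w => η (w, ls)) (t • q))
        = t⁻¹ • (gradient (fun w => Φ (w, ls)) (t • q)
              - gradient (fun w => Φ (w, lam (σ n))) (t • q))
          + (t⁻¹ • gradient (fun w => η (w, ls)) (t • q)
            - t⁻¹ • gradient (fun w => η (w, lam (σ n))) (t • q)) := by
      rw [smul_sub]
      abel
    rw [hrew]
    have h1 : ‖t⁻¹ • (gradient (fun w => Φ (w, ls)) (t • q)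
        - gradient (fun w => Φ (w, lam (σ n))) (t • q))‖ < ε/4 := by
      rw [norm_smul, norm_inv, Real.norm_eq_abs, abs_of_pos ht0, norm_sub_rev]
      calc t⁻¹ * ‖gradient (fun w => Φ (w, lam (σ n))) (t • q)
            - gradient (fun w => Φ (w, ls)) (t • q)‖
          < t⁻¹ * (ε/4 * t) := by
            apply mul_lt_mul_of_pos_left _ (inv_pos.mpr ht0)
            exact hNn
        _ = ε/4 := by rw [mul_comm (ε/4) t, ← mul_assoc, inv_mul_cancel₀ ht0.ne', one_mul]
    have h2 := hηb ls hlsIcc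
    have h3 := hηb (lam (σ n)) (hlmem (σ n))
    calc ‖t⁻¹ • (gradient (fun w => Φ (w, ls)) (t • q)
              - gradient (fun w => Φ (w, lam (σ n))) (t • q))
          + (t⁻¹ • gradient (fun w => η (w, ls)) (t • q)
            - t⁻¹ • gradient (fun w => η (w, lam (σ n))) (t • q))‖
        ≤ ‖t⁻¹ • (gradient (fun w => Φ (w, ls)) (t • q)
              - gradient (fun w => Φ (w, lam (σ n))) (t • q))‖
          + (‖t⁻¹ • gradient (fun w => η (w, ls)) (t • q)‖
            + ‖t⁻¹ • gradient (fun w => η (w, lam (σ n))) (t • q)‖) := by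
          refine (norm_add_le _ _).trans ?_
          exact add_le_add le_rfl (norm_sub_le _ _)
      _ < ε := by linarith
  -- conclusion
  have hfix : K ls q = q := tendsto_nhds_unique hKq_c hKq_q
  have hTq : T q = 0 := by rw [hT q, hfix, sub_self]
  have hq0 : q = 0 := by
    have := T.injective (a₁ := q) (a₂ := 0) (by rw [hTq, map_zero])
    exact this
  rw [hq0, norm_zero] at hq1
  exact one_ne_zero hq1.symm
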